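/- Let h : ℝ̄ → ℝ̄ be non-decreasing and right-continuous, and define its generalized inverse h⁻¹(x) := inf{t ∈ ℝ̄ : h(t) > x}. Then for every t ∈ ℝ̄ the following chain of inequalities holds: h⁻¹(h(t−)−) ≤ h⁻¹(h(t)−) ≤ t ≤ h⁻¹(h(t−)) ≤ h⁻¹(h(t)), where for a non-decreasing function f : ℝ̄ → ℝ̄ the left limit is f(x−) := sup{f(y) : y < x} (with sup ∅ = −∞). -/

import Mathlib

/-- The generalized inverse of `h : ℝ̄ → ℝ̄`, `h⁻¹(x) = inf {t | h t > x}`. -/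
noncomputable def genInv (h : EReal → EReal) (x : EReal) : EReal :=
  sInf {t : EReal | x < h t}

/-- Left value `f(x−) = sup {f y | y < x}` of `f : ℝ̄ → ℝ̄` (with `sup ∅ = −∞`). -/
noncomputable def leftVal (f : EReal → EReal) (x : EReal) : EReal :=
  sSup (f '' Set.Iio x)

/-- For `h : ℝ̄ → ℝ̄` non-decreasing and right-continuous, the chain of inequalities
`h⁻¹(h(t−)−) ≤ h⁻¹(h(t)−) ≤ t ≤ h⁻¹(h(t−)) ≤ h⁻¹(h(t))` holds for all `t`. -/
theorem genInv_chain (h : EReal → EReal)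
    (hmono : Monotone h)
    (hrc : ∀ x : EReal, ContinuousWithinAt h (Set.Ici x) x)
    (t : EReal) :
    leftVal (genInv h) (leftVal h t) ≤ leftVal (genInv h) (h t) ∧
      leftVal (genInv h) (h t) ≤ t ∧
        t ≤ genInv h (leftVal h t) ∧
          genInv h (leftVal h t) ≤ genInv h (h t) := by
  have hInvMono : Monotone (genInv h) := by
    intro a b hab
    exact sInf_le_sInf fun u hu => lt_of_le_of_lt hab hu
  have h1 : leftVal h t ≤ h t := by
    apply sSup_le
    rintro _ ⟨y, hy, rfl⟩
    exact hmono (le_of_lt hy)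
  have h4 : genInv h (leftVal h t) ≤ genInv h (h t) := hInvMono h1
  have h2 : leftVal (genInv h) (h t) ≤ t := by
    apply sSup_le
    rintro _ ⟨s, hs, rfl⟩
    exact sInf_le hs
  have h3 : t ≤ genInv h (leftVal h t) := by
    apply le_sInf
    intro u hu
    by_contra hc
    push_neg at hc
    exact absurd (le_sSup (Set.mem_image_of_mem h hc) : h u ≤ leftVal h t) (not_le.2 hu)
  have h0 : leftVal (genInv h) (leftVal h t) ≤ leftVal (genInv h) (h t) :=
    sSup_le_sSup (Set.image_mono (Set.Iio_subset_Iio h1))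
  exact ⟨h0, h2, h3, h4⟩
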